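/- Let (m, g, φ, ϕ, σ) be a crossed module of Lie 2-algebras with m: m₁ →d̃ m₀ and g: g₁ →d g₀, structure map ϕ = (ϕ₀, ϕ₁): m → g and σ: g₀ ∧ m₀ → g₁. Then the mapping cone complex 𝔙: m₁ →d_D g₁ ⊕ m₀ →d_D g₀, with d_D(ξ) = −ϕ₁ξ + d̃ξ and d_D(a+α) = da + ϕ₀α, equipped with the brackets ⟦x,y⟧ = l₂(x,y), ⟦x,ξ⟧ = x▷ξ, ⟦a+α, b+β⟧ = a▷β + b▷α, ⟦x, a+α⟧ = l₂(x,a) − σ(x,α) + x▷α, and the ternary bracket l³(x,y,z) = l₃(x,y,z), l³(x,y,a+α) = −(x,y)▷α, is a strict Lie 3-algebra (i.e., a 3-term L∞-algebra with l₄ = 0). -/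

import Mathlib

universe u

/-- Raw data of a Lie 2-algebra: a 2-term complex `g1 → g0` with a binary bracket
(`l2` on degree 0, `l2m` mixed) and a Jacobiator `l3`. -/
structure LieTwoStr (g0 g1 : Type u) : Type u where
  d : g1 → g0
  l2 : g0 → g0 → g0
  l2m : g0 → g1 → g1
  l3 : g0 → g0 → g0 → g1

/-- Raw data of a homomorphism of Lie 2-algebras. -/
structure TwoHom (g0 g1 h0 h1 : Type u) : Type u where
  f0 : g0 → h0
  f1 : g1 → h1
  f2 : g0 → g0 → h1

/-- Raw data of an action of a Lie 2-algebra on a 2-term complex `m1 → m0`. -/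
structure TwoAction (g0 g1 m0 m1 : Type u) : Type u where
  r0 : g0 → m0 → m0
  r0' : g0 → m1 → m1
  r1 : g1 → m0 → m1
  r2 : g0 → g0 → m0 → m1

variable (K : Type u) [Field K]
variable {g0 g1 h0 h1 m0 m1 : Type u}
  [AddCommGroup g0] [Module K g0] [AddCommGroup g1] [Module K g1]
  [AddCommGroup h0] [Module K h0] [AddCommGroup h1] [Module K h1]
  [AddCommGroup m0] [Module K m0] [AddCommGroup m1] [Module K m1]

/-- The 2-term `L∞`-algebra axioms (Lie 2-algebra). -/
def IsLieTwoAlgebra (L : LieTwoStr g0 g1) : Prop :=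
  IsLinearMap K L.d ∧
  (∀ x, IsLinearMap K (L.l2 x)) ∧ (∀ y, IsLinearMap K (fun x => L.l2 x y)) ∧
  (∀ x, IsLinearMap K (L.l2m x)) ∧ (∀ a, IsLinearMap K (fun x => L.l2m x a)) ∧
  (∀ x y, IsLinearMap K (L.l3 x y)) ∧ (∀ x z, IsLinearMap K (fun y => L.l3 x y z)) ∧
  (∀ y z, IsLinearMap K (fun x => L.l3 x y z)) ∧
  (∀ x y, L.l2 x y = - L.l2 y x) ∧
  (∀ x y z, L.l3 x y z = - L.l3 y x z) ∧
  (∀ x y z, L.l3 x y z = - L.l3 x z y) ∧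
  (∀ x a, L.d (L.l2m x a) = L.l2 x (L.d a)) ∧
  (∀ a b, L.l2m (L.d a) b = - L.l2m (L.d b) a) ∧
  (∀ x y z, L.d (L.l3 x y z) =
    L.l2 x (L.l2 y z) - L.l2 y (L.l2 x z) - L.l2 (L.l2 x y) z) ∧
  (∀ x y a, L.l3 x y (L.d a) =
    L.l2m x (L.l2m y a) - L.l2m y (L.l2m x a) - L.l2m (L.l2 x y) a) ∧
  (∀ x y z w,
    L.l2m x (L.l3 y z w) - L.l2m y (L.l3 x z w) + L.l2m z (L.l3 x y w)
      - L.l2m w (L.l3 x y z)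
    = L.l3 (L.l2 x y) z w - L.l3 (L.l2 x z) y w + L.l3 (L.l2 x w) y z
      + L.l3 (L.l2 y z) x w - L.l3 (L.l2 y w) x z + L.l3 (L.l2 z w) x y)

/-- The axioms of a homomorphism of Lie 2-algebras. -/
def IsHom (L : LieTwoStr g0 g1) (L' : LieTwoStr h0 h1) (f : TwoHom g0 g1 h0 h1) : Prop :=
  IsLinearMap K f.f0 ∧ IsLinearMap K f.f1 ∧
  (∀ x, IsLinearMap K (f.f2 x)) ∧ (∀ y, IsLinearMap K (fun x => f.f2 x y)) ∧
  (∀ x y, f.f2 x y = - f.f2 y x) ∧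
  (∀ a, L'.d (f.f1 a) = f.f0 (L.d a)) ∧
  (∀ x y, f.f0 (L.l2 x y) - L'.l2 (f.f0 x) (f.f0 y) = L'.d (f.f2 x y)) ∧
  (∀ x a, f.f1 (L.l2m x a) - L'.l2m (f.f0 x) (f.f1 a) = f.f2 x (L.d a)) ∧
  (∀ x y z,
    L'.l2m (f.f0 x) (f.f2 y z) + L'.l2m (f.f0 y) (f.f2 z x) + L'.l2m (f.f0 z) (f.f2 x y)
      + L'.l3 (f.f0 x) (f.f0 y) (f.f0 z)
    = f.f2 (L.l2 x y) z + f.f2 (L.l2 y z) x + f.f2 (L.l2 z x) y + f.f1 (L.l3 x y z))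

/-- An action of a Lie 2-algebra `L` on a 2-term complex `dm : m1 → m0`,
i.e. a Lie 2-algebra homomorphism `L → End(m)`. -/
def IsAction (L : LieTwoStr g0 g1) (dm : m1 → m0) (A : TwoAction g0 g1 m0 m1) : Prop :=
  (∀ x, IsLinearMap K (A.r0 x)) ∧ (∀ α, IsLinearMap K (fun x => A.r0 x α)) ∧
  (∀ x, IsLinearMap K (A.r0' x)) ∧ (∀ ξ, IsLinearMap K (fun x => A.r0' x ξ)) ∧
  (∀ a, IsLinearMap K (A.r1 a)) ∧ (∀ α, IsLinearMap K (fun a => A.r1 a α)) ∧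
  (∀ x y, IsLinearMap K (A.r2 x y)) ∧ (∀ x α, IsLinearMap K (fun y => A.r2 x y α)) ∧
  (∀ y α, IsLinearMap K (fun x => A.r2 x y α)) ∧
  (∀ x y α, A.r2 x y α = - A.r2 y x α) ∧
  (∀ x ξ, dm (A.r0' x ξ) = A.r0 x (dm ξ)) ∧
  (∀ a α, A.r0 (L.d a) α = dm (A.r1 a α)) ∧
  (∀ a ξ, A.r0' (L.d a) ξ = A.r1 a (dm ξ)) ∧
  (∀ x y α, A.r0 (L.l2 x y) α - A.r0 x (A.r0 y α) + A.r0 y (A.r0 x α) = dm (A.r2 x y α)) ∧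
  (∀ x y ξ, A.r0' (L.l2 x y) ξ - A.r0' x (A.r0' y ξ) + A.r0' y (A.r0' x ξ)
      = A.r2 x y (dm ξ)) ∧
  (∀ x a α, A.r1 (L.l2m x a) α - A.r0' x (A.r1 a α) + A.r1 a (A.r0 x α)
      = A.r2 x (L.d a) α) ∧
  (∀ x y z α,
    A.r0' x (A.r2 y z α) - A.r2 y z (A.r0 x α)
      + A.r0' y (A.r2 z x α) - A.r2 z x (A.r0 y α)
      + A.r0' z (A.r2 x y α) - A.r2 x y (A.r0 z α)
    = A.r2 (L.l2 x y) z α + A.r2 (L.l2 y z) x α + A.r2 (L.l2 z x) y α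
      + A.r1 (L.l3 x y z) α)

/-- A degree-0 derivation `(X0, X1, lX)` of a Lie 2-algebra `M`. -/
def IsDer0 (M : LieTwoStr m0 m1) (X0 : m0 → m0) (X1 : m1 → m1) (lX : m0 → m0 → m1) : Prop :=
  (∀ ξ, M.d (X1 ξ) = X0 (M.d ξ)) ∧
  (∀ α β, M.d (lX α β) = X0 (M.l2 α β) - M.l2 (X0 α) β - M.l2 α (X0 β)) ∧
  (∀ α ξ, lX α (M.d ξ) = X1 (M.l2m α ξ) - M.l2m (X0 α) ξ - M.l2m α (X1 ξ)) ∧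
  (∀ α β γ, X1 (M.l3 α β γ) =
    lX α (M.l2 β γ) + M.l2m α (lX β γ) + M.l3 (X0 α) β γ
      + lX β (M.l2 γ α) + M.l2m β (lX γ α) + M.l3 α (X0 β) γ
      + lX γ (M.l2 α β) + M.l2m γ (lX α β) + M.l3 α β (X0 γ))

/-- An action of the Lie 2-algebra `L` on the Lie 2-algebra `M` by derivations:
an action together with maps `lφ x : ∧²m0 → m1` such that each `φ0(x) + l_{φ0(x)}`
is a degree-0 derivation of `M` and `(φ0 + l_{φ0}, φ1, φ2) : L → Der(M)` is a
Lie 2-algebra homomorphism. -/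
def IsActionByDerivations (L : LieTwoStr g0 g1) (M : LieTwoStr m0 m1)
    (A : TwoAction g0 g1 m0 m1) (lφ : g0 → m0 → m0 → m1) : Prop :=
  IsAction K L M.d A ∧
  (∀ x, IsDer0 M (A.r0 x) (A.r0' x) (lφ x)) ∧
  (∀ x α, IsLinearMap K (lφ x α)) ∧ (∀ x β, IsLinearMap K (fun α => lφ x α β)) ∧
  (∀ α β, IsLinearMap K (fun x => lφ x α β)) ∧
  (∀ x α β, lφ x α β = - lφ x β α) ∧
  (∀ a α β, lφ (L.d a) α β =
    A.r1 a (M.l2 α β) - M.l2m α (A.r1 a β) + M.l2m β (A.r1 a α)) ∧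
  (∀ x y α β, lφ (L.l2 x y) α β
      - (A.r0' x (lφ y α β) - lφ y (A.r0 x α) β - lφ y α (A.r0 x β))
      + (A.r0' y (lφ x α β) - lφ x (A.r0 y α) β - lφ x α (A.r0 y β))
    = A.r2 x y (M.l2 α β) - M.l2m α (A.r2 x y β) + M.l2m β (A.r2 x y α))

variable {K}

/-- The abelian (trivial) Lie 2-algebra structure on a 2-term complex. -/
def abelianTwo (dm : m1 → m0) : LieTwoStr m0 m1 where
  d := dm
  l2 := fun _ _ => 0
  l2m := fun _ _ => 0
  l3 := fun _ _ _ => 0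

/-- The crossed product `g ▷_φ m` of Lie 2-algebras. -/
def crossedProduct (L : LieTwoStr g0 g1) (M : LieTwoStr m0 m1)
    (A : TwoAction g0 g1 m0 m1) (lφ : g0 → m0 → m0 → m1) :
    LieTwoStr (g0 × m0) (g1 × m1) where
  d q := (L.d q.1, M.d q.2)
  l2 p q := (L.l2 p.1 q.1, M.l2 p.2 q.2 + A.r0 p.1 q.2 - A.r0 q.1 p.2)
  l2m p q := (L.l2m p.1 q.1, M.l2m p.2 q.2 + A.r0' p.1 q.2 - A.r1 q.1 p.2)
  l3 p q r := (L.l3 p.1 q.1 r.1,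
    M.l3 p.2 q.2 r.2 - A.r2 p.1 q.1 r.2 - A.r2 q.1 r.1 p.2 - A.r2 r.1 p.1 q.2
      + lφ p.1 q.2 r.2 + lφ q.1 r.2 p.2 + lφ r.1 p.2 q.2)

variable (K)

/-- A crossed module of Lie 2-algebras `(m, g, φ, ϕ, σ)`. -/
def IsCrossedModule (L : LieTwoStr g0 g1) (M : LieTwoStr m0 m1)
    (A : TwoAction g0 g1 m0 m1) (lφ : g0 → m0 → m0 → m1)
    (p0 : m0 → g0) (p1 : m1 → g1) (p2 : m0 → m0 → g1) (σ : g0 → m0 → g1) : Prop :=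
  IsLieTwoAlgebra K L ∧ IsLieTwoAlgebra K M ∧
  IsActionByDerivations K L M A lφ ∧
  IsHom K M L ⟨p0, p1, p2⟩ ∧
  (∀ x, IsLinearMap K (σ x)) ∧ (∀ α, IsLinearMap K (fun x => σ x α)) ∧
  -- the homomorphism property of Π = Id + σ + ϕ on the crossed product
  (∀ x α, p0 (A.r0 x α) - L.l2 x (p0 α) = L.d (σ x α)) ∧
  (∀ a α, p1 (A.r1 a α) + L.l2m (p0 α) a = σ (L.d a) α) ∧
  (∀ x ξ, p1 (A.r0' x ξ) - L.l2m x (p1 ξ) = σ x (M.d ξ)) ∧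
  (∀ x y α, - L.l2m x (σ y α) + L.l2m y (σ x α) + σ (L.l2 x y) α
      - σ x (A.r0 y α) + σ y (A.r0 x α)
    = L.l3 x y (p0 α) + p1 (A.r2 x y α)) ∧
  -- conditions (i)-(iv)
  (∀ α β, M.l2 α β = A.r0 (p0 α) β) ∧
  (∀ α ξ, M.l2m α ξ = A.r0' (p0 α) ξ) ∧
  (∀ ξ α, A.r1 (p1 ξ) α = - M.l2m α ξ) ∧
  (∀ α β γ, M.l3 α β γ = - A.r2 (p0 α) (p0 β) γ - A.r1 (σ (p0 α) β) γ) ∧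
  (∀ x β γ, lφ x β γ = - A.r2 x (p0 β) γ - A.r1 (σ x β) γ) ∧
  (∀ α β, p2 α β = σ (p0 α) β) ∧
  (∀ α β, p2 α β = - σ (p0 β) α)

/-! The mapping cone complex `𝔙 : m₁ → g₁ ⊕ m₀ → g₀` of a crossed module, with its
binary bracket `⟦·,·⟧` and ternary bracket `l³`. -/

def coneD2 (M : LieTwoStr m0 m1) (p1 : m1 → g1) : m1 → g1 × m0 :=
  fun ξ => (-p1 ξ, M.d ξ)

def coneD1 (L : LieTwoStr g0 g1) (p0 : m0 → g0) : g1 × m0 → g0 :=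
  fun u => L.d u.1 + p0 u.2

/-- `⟦x, a+α⟧ = l₂(x,a) − σ(x,α) + x▷α`. -/
def coneB01 (L : LieTwoStr g0 g1) (A : TwoAction g0 g1 m0 m1) (σ : g0 → m0 → g1) :
    g0 → g1 × m0 → g1 × m0 :=
  fun x u => (L.l2m x u.1 - σ x u.2, A.r0 x u.2)

/-- `⟦a+α, b+β⟧ = a▷β + b▷α`. -/
def coneB11 (A : TwoAction g0 g1 m0 m1) : g1 × m0 → g1 × m0 → m1 :=
  fun u v => A.r1 u.1 v.2 + A.r1 v.1 u.2

/-- `l³(x,y,a+α) = −(x,y)▷α`. -/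
def coneT1 (A : TwoAction g0 g1 m0 m1) : g0 → g0 → g1 × m0 → m1 :=
  fun x y u => - A.r2 x y u.2

/-- Inclusion `g1 → g1 ⊕ m0`. -/
def coneE : g1 → g1 × m0 := fun a => (a, (0 : m0))

/-- The mapping cone complex of a crossed module of Lie 2-algebras, with
the brackets `⟦·,·⟧` and `l³`, is a strict Lie 3-algebra (3-term `L∞`-algebra with
`l₄ = 0`): the `L∞` identities hold for `n = 1, …, 5`. -/
theorem mapping_cone_strict_lie3 (L : LieTwoStr g0 g1) (M : LieTwoStr m0 m1)
    (A : TwoAction g0 g1 m0 m1) (lφ : g0 → m0 → m0 → m1)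
    (p0 : m0 → g0) (p1 : m1 → g1) (p2 : m0 → m0 → g1) (σ : g0 → m0 → g1)
    (hCM : IsCrossedModule K L M A lφ p0 p1 p2 σ) :
    -- multilinearity and graded skew-symmetry
    (∀ x : g0, IsLinearMap K (coneB01 L A σ x)) ∧
    (∀ u : g1 × m0, IsLinearMap K (fun x => coneB01 L A σ x u)) ∧
    (∀ u : g1 × m0, IsLinearMap K (coneB11 A u)) ∧
    (∀ v : g1 × m0, IsLinearMap K (fun u => coneB11 A u v)) ∧
    (∀ x y : g0, IsLinearMap K (coneT1 A x y)) ∧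
    (∀ (x : g0) (u : g1 × m0), IsLinearMap K (fun y => coneT1 A x y u)) ∧
    (∀ u v : g1 × m0, coneB11 A u v = coneB11 A v u) ∧
    (∀ (x y : g0) (u : g1 × m0), coneT1 A x y u = - coneT1 A y x u) ∧
    -- n = 1 : d_D² = 0
    (∀ ξ : m1, coneD1 L p0 (coneD2 M p1 ξ) = 0) ∧
    -- n = 2 : Leibniz rules
    (∀ (x : g0) (u : g1 × m0),
      coneD1 L p0 (coneB01 L A σ x u) = L.l2 x (coneD1 L p0 u)) ∧
    (∀ (x : g0) (ξ : m1),
      coneD2 M p1 (A.r0' x ξ) = coneB01 L A σ x (coneD2 M p1 ξ)) ∧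
    (∀ (u : g1 × m0) (ξ : m1),
      A.r0' (coneD1 L p0 u) ξ = coneB11 A u (coneD2 M p1 ξ)) ∧
    (∀ u v : g1 × m0,
      coneD2 M p1 (coneB11 A u v)
        = coneB01 L A σ (coneD1 L p0 u) v + coneB01 L A σ (coneD1 L p0 v) u) ∧
    -- n = 3 : graded Jacobi identities
    (∀ x y z : g0,
      L.l2 (L.l2 x y) z + L.l2 (L.l2 y z) x + L.l2 (L.l2 z x) y
        = - L.d (L.l3 x y z)) ∧
    (∀ (x y : g0) (ξ : m1),
      A.r0' (L.l2 x y) ξ - A.r0' x (A.r0' y ξ) + A.r0' y (A.r0' x ξ)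
        = - coneT1 A x y (coneD2 M p1 ξ)) ∧
    (∀ (x y : g0) (u : g1 × m0),
      coneB01 L A σ (L.l2 x y) u - coneB01 L A σ x (coneB01 L A σ y u)
          + coneB01 L A σ y (coneB01 L A σ x u)
        = - coneE (L.l3 x y (coneD1 L p0 u)) - coneD2 M p1 (coneT1 A x y u)) ∧
    (∀ (x : g0) (u v : g1 × m0),
      coneB11 A (coneB01 L A σ x u) v - A.r0' x (coneB11 A u v)
          + coneB11 A (coneB01 L A σ x v) u
        = - coneT1 A x (coneD1 L p0 u) v - coneT1 A x (coneD1 L p0 v) u) ∧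
    -- n = 4 : coherence identities (l₄ = 0)
    (∀ x y z w : g0,
      coneB01 L A σ x (coneE (L.l3 y z w)) - coneB01 L A σ y (coneE (L.l3 x z w))
          + coneB01 L A σ z (coneE (L.l3 x y w)) - coneB01 L A σ w (coneE (L.l3 x y z))
        = coneE (L.l3 (L.l2 x y) z w) - coneE (L.l3 (L.l2 x z) y w)
          + coneE (L.l3 (L.l2 x w) y z) + coneE (L.l3 (L.l2 y z) x w)
          - coneE (L.l3 (L.l2 y w) x z) + coneE (L.l3 (L.l2 z w) x y)) ∧
    (∀ (x y z : g0) (u : g1 × m0),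
      A.r0' x (coneT1 A y z u) - A.r0' y (coneT1 A x z u) + A.r0' z (coneT1 A x y u)
          + coneB11 A (coneE (L.l3 x y z)) u
        = coneT1 A (L.l2 x y) z u - coneT1 A (L.l2 x z) y u + coneT1 A (L.l2 y z) x u
          + coneT1 A y z (coneB01 L A σ x u) - coneT1 A x z (coneB01 L A σ y u)
          + coneT1 A x y (coneB01 L A σ z u)) ∧
    -- n = 5 : l³ ∘ l³ vanishes
    (∀ x1 x2 x3 x4 x5 : g0,
      coneT1 A x4 x5 (coneE (L.l3 x1 x2 x3)) - coneT1 A x3 x5 (coneE (L.l3 x1 x2 x4))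
        + coneT1 A x3 x4 (coneE (L.l3 x1 x2 x5))
        + coneT1 A x2 x5 (coneE (L.l3 x1 x3 x4))
        - coneT1 A x2 x4 (coneE (L.l3 x1 x3 x5))
        + coneT1 A x2 x3 (coneE (L.l3 x1 x4 x5))
        - coneT1 A x1 x5 (coneE (L.l3 x2 x3 x4))
        + coneT1 A x1 x4 (coneE (L.l3 x2 x3 x5))
        - coneT1 A x1 x3 (coneE (L.l3 x2 x4 x5))
        + coneT1 A x1 x2 (coneE (L.l3 x3 x4 x5)) = 0) := by
  obtain ⟨hL, hM, hAD, hHom, hσ0, hσ1, hq1, hq2, hq3, hq4, hi, hii, hiii, hiv, hv,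
    hp2a, hp2b⟩ := hCM
  obtain ⟨hLd, hL2a, hL2b, hL2ma, hL2mb, hL3a, hL3b, hL3c, hL2sk, hL3sk1, hL3sk2,
    hLdl2m, hLl2md, hLdl3, hLl3d, hLcoh⟩ := hL
  obtain ⟨hMd, hM2a, hM2b, hM2ma, hM2mb, hM3a, hM3b, hM3c, hM2sk, hM3sk1, hM3sk2,
    hMdl2m, hMl2md, hMdl3, hMl3d, hMcoh⟩ := hM
  obtain ⟨hA, hDer, hlp1, hlp2, hlp3, hlpsk, hlpd, hlpl2⟩ := hAD
  obtain ⟨hr0a, hr0b, hr0'a, hr0'b, hr1a, hr1b, hr2a, hr2b, hr2c, hr2sk,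
    hdr0', hr0d, hr0'd, hJac0, hJac0', hJacm, hBig⟩ := hA
  obtain ⟨hp0l, hp1l, hp2l1, hp2l2, hp2sk, hdp1, hp0l2, hp1l2m, hpcoh⟩ := hHom
  refine ⟨?_, ?_, ?_, ?_, ?_, ?_, ?_, ?_, ?_, ?_, ?_, ?_, ?_, ?_, ?_, ?_, ?_, ?_, ?_, ?_⟩
  · -- 1: B01 linear in u
    intro x
    refine ⟨fun u v => ?_, fun c u => ?_⟩ <;>
      simp only [coneB01, Prod.fst_add, Prod.snd_add, Prod.smul_fst, Prod.smul_snd,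
        Prod.mk_add_mk, Prod.smul_mk, (hL2ma x).map_add, (hσ0 x).map_add,
        (hr0a x).map_add, (hL2ma x).map_smul, (hσ0 x).map_smul, (hr0a x).map_smul,
        smul_sub, Prod.mk.injEq] <;>
      constructor <;> first | rfl | trivial | abel
  · -- 2: B01 linear in x
    intro u
    refine ⟨fun x y => ?_, fun c x => ?_⟩ <;>
      simp only [coneB01, Prod.mk_add_mk, Prod.smul_mk, (hL2mb u.1).map_add,
        (hσ1 u.2).map_add, (hr0b u.2).map_add, (hL2mb u.1).map_smul,
        (hσ1 u.2).map_smul, (hr0b u.2).map_smul, smul_sub, Prod.mk.injEq] <;>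
      constructor <;> first | rfl | trivial | abel
  · -- 3: B11 linear in v
    intro u
    refine ⟨fun v w => ?_, fun c v => ?_⟩ <;>
      simp only [coneB11, Prod.fst_add, Prod.snd_add, Prod.smul_fst, Prod.smul_snd,
        (hr1a u.1).map_add, (hr1b u.2).map_add, (hr1a u.1).map_smul,
        (hr1b u.2).map_smul, smul_add] <;> abel
  · -- 4: B11 linear in u
    intro v
    refine ⟨fun u w => ?_, fun c u => ?_⟩ <;>
      simp only [coneB11, Prod.fst_add, Prod.snd_add, Prod.smul_fst, Prod.smul_snd,
        (hr1a v.1).map_add, (hr1b v.2).map_add, (hr1a v.1).map_smul,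
        (hr1b v.2).map_smul, smul_add] <;> abel
  · -- 5: T1 linear in u
    intro x y
    refine ⟨fun u v => ?_, fun c u => ?_⟩ <;>
      simp only [coneT1, Prod.fst_add, Prod.snd_add, Prod.smul_fst, Prod.smul_snd,
        (hr2a x y).map_add, (hr2a x y).map_smul, smul_neg] <;> abel
  · -- 6: T1 linear in y
    intro x u
    refine ⟨fun y z => ?_, fun c y => ?_⟩ <;>
      simp only [coneT1, (hr2b x u.2).map_add, (hr2b x u.2).map_smul, smul_neg] <;> abel
  · -- 7: B11 symmetric
    intro u v; simp only [coneB11]; abel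
  · -- 8: T1 skew
    intro x y u; simp only [coneT1]; rw [hr2sk x y u.2]
  · -- 9: d² = 0
    intro ξ
    simp only [coneD1, coneD2]
    rw [hLd.map_neg, hdp1]; abel
  · -- 10: d(B01)
    intro x u
    simp only [coneD1, coneB01]
    linear_combination (norm := abel) hLd.map_sub (L.l2m x u.1) (σ x u.2)
      + hLdl2m x u.1 + hq1 x u.2 - (hL2a x).map_add (L.d u.1) (p0 u.2)
  · -- 11: coneD2 (r0' x ξ)
    intro x ξ
    simp only [coneD2, coneB01, Prod.mk.injEq]
    constructor
    · linear_combination (norm := abel) - hq3 x ξ - (hL2ma x).map_neg (p1 ξ)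
    · exact hdr0' x ξ
  · -- 12: r0' (coneD1 u)
    intro u ξ
    simp only [coneD1, coneD2, coneB11]
    linear_combination (norm := abel) (hr0'b ξ).map_add (L.d u.1) (p0 u.2)
      + hr0'd u.1 ξ - hii u.2 ξ + hiii ξ u.2 - (hr1b u.2).map_neg (p1 ξ)
  · -- 13: coneD2 (B11 u v)
    intro u v
    simp only [coneD2, coneB11, coneB01, coneD1, Prod.mk_add_mk, Prod.mk.injEq]
    constructor
    · linear_combination (norm := abel)
        - hp1l.map_add (A.r1 u.1 v.2) (A.r1 v.1 u.2)
        - hq2 u.1 v.2 - hq2 v.1 u.2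
        - (hL2mb v.1).map_add (L.d u.1) (p0 u.2)
        - (hL2mb u.1).map_add (L.d v.1) (p0 v.2)
        + (hσ1 v.2).map_add (L.d u.1) (p0 u.2)
        + (hσ1 u.2).map_add (L.d v.1) (p0 v.2)
        - hLl2md u.1 v.1 - hp2a u.2 v.2 + hp2b u.2 v.2
    · linear_combination (norm := abel)
        hMd.map_add (A.r1 u.1 v.2) (A.r1 v.1 u.2)
        - hr0d u.1 v.2 - hr0d v.1 u.2
        - (hr0b v.2).map_add (L.d u.1) (p0 u.2)
        - (hr0b u.2).map_add (L.d v.1) (p0 v.2)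
        + hi u.2 v.2 + hi v.2 u.2 - hM2sk u.2 v.2
  · -- 14: Jacobi on g0
    intro x y z
    have e1 : L.l2 (L.l2 z x) y = L.l2 y (L.l2 x z) := by
      rw [hL2sk (L.l2 z x) y, hL2sk z x, (hL2a y).map_neg, neg_neg]
    linear_combination (norm := abel) hLdl3 x y z + hL2sk (L.l2 y z) x + e1
  · -- 15: r0' Jacobi
    intro x y ξ
    simp only [coneT1, coneD2]
    linear_combination (norm := abel) hJac0' x y ξ
  · -- 16: B01 Jacobi
    intro x y u
    simp only [coneB01, coneE, coneD1, coneD2, coneT1, Prod.mk_sub_mk, Prod.mk_add_mk,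
      Prod.neg_mk, Prod.mk.injEq]
    constructor
    · linear_combination (norm := abel)
        - (hL2ma x).map_sub (L.l2m y u.1) (σ y u.2)
        + (hL2ma y).map_sub (L.l2m x u.1) (σ x u.2)
        + hLl3d x y u.1 - hq4 x y u.2
        + (hL3a x y).map_add (L.d u.1) (p0 u.2)
        - hp1l.map_neg (A.r2 x y u.2)
    · linear_combination (norm := abel) hJac0 x y u.2 + hMd.map_neg (A.r2 x y u.2)
  · -- 17: B11/B01 Jacobi
    intro x u v
    simp only [coneB11, coneB01, coneD1, coneT1]
    linear_combination (norm := abel)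
      (hr1b v.2).map_sub (L.l2m x u.1) (σ x u.2)
      + (hr1b u.2).map_sub (L.l2m x v.1) (σ x v.2)
      - (hr0'a x).map_add (A.r1 u.1 v.2) (A.r1 v.1 u.2)
      + hJacm x u.1 v.2 + hJacm x v.1 u.2
      - (hr2b x v.2).map_add (L.d u.1) (p0 u.2)
      - (hr2b x u.2).map_add (L.d v.1) (p0 v.2)
      - hv x u.2 v.2 - hv x v.2 u.2 + hlpsk x u.2 v.2
  · -- 18: n = 4, first
    intro x y z w
    simp only [coneB01, coneE, Prod.mk_sub_mk, Prod.mk_add_mk, Prod.mk.injEq]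
    constructor
    · linear_combination (norm := abel) hLcoh x y z w
        - (hσ0 x).map_zero + (hσ0 y).map_zero - (hσ0 z).map_zero + (hσ0 w).map_zero
    · linear_combination (norm := abel)
        (hr0a x).map_zero - (hr0a y).map_zero + (hr0a z).map_zero - (hr0a w).map_zero
  · -- 19: n = 4, second
    intro x y z u
    have e2 : A.r0' y (A.r2 z x u.2) = - A.r0' y (A.r2 x z u.2) := by
      rw [hr2sk z x u.2]; exact (hr0'a y).map_neg _
    have e3 : A.r2 (L.l2 z x) y u.2 = - A.r2 (L.l2 x z) y u.2 := by
      rw [hL2sk z x]; exact (hr2c y u.2).map_neg _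
    simp only [coneT1, coneB11, coneE, coneB01]
    linear_combination (norm := abel) - hBig x y z u.2
      + (hr0'a x).map_neg (A.r2 y z u.2)
      - (hr0'a y).map_neg (A.r2 x z u.2) + e2
      + (hr0'a z).map_neg (A.r2 x y u.2)
      + (hr1a u.1).map_zero - e3 - hr2sk z x (A.r0 y u.2)
  · -- 20: n = 5
    intro x1 x2 x3 x4 x5
    have z : ∀ a b : g0, A.r2 a b (0 : m0) = 0 := fun a b => (hr2a a b).map_zero
    simp only [coneT1, coneE, z, neg_zero]
    abel
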